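/- Let N ≥ 2, let {C_1,…,C_t} be a partition of the index set {0,…,N−1}, and let L be an N×N real symmetric matrix whose kernel is exactly the span of the indicator vectors 1_{C_1},…,1_{C_t} (as holds for the graph Laplacian of a weighted undirected graph with connected components C_1,…,C_t). Let Λ ⊆ {0,…,N−1} be such that its complement Λᶜ intersects every block C_k. Then the space {x ∈ ℝ^N : (L·x)_i = 0 for all i ∈ Λ} has dimension exactly |Λᶜ| = N − |Λ|. -/

import Mathlib

open Matrix

/-- Let `L` be a symmetric matrix whose kernel is exactly the span of the indicator
vectors of the blocks `C 1, …, C t` of a partition of the index set (the Laplacian of a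
graph with connected components `C k`). If the complement of `Λ` intersects every block,
then the cosparse analysis subspace `{x : (L x)_i = 0 for i ∈ Λ}` has dimension exactly
`N - |Λ|`. -/
theorem analysis_subspace_dim_disconnected_laplacian
    (N t : ℕ) (hN : 2 ≤ N)
    (C : Fin t → Finset (Fin N))
    (hCne : ∀ k, (C k).Nonempty)
    (hCdisj : ∀ k l, k ≠ l → Disjoint (C k) (C l))
    (hCcover : ∀ i : Fin N, ∃ k, i ∈ C k)
    (L : Matrix (Fin N) (Fin N) ℝ)
    (hLsymm : L.IsSymm)
    (hker : ∀ x : Fin N → ℝ, L.mulVec x = 0 ↔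
      ∃ c : Fin t → ℝ, x = ∑ k, c k • (fun i => if i ∈ C k then (1 : ℝ) else 0))
    (Λ : Finset (Fin N)) (hΛ : ∀ k, ∃ i ∈ C k, i ∉ Λ) :
    Module.finrank ℝ
      ↥(⨅ i ∈ Λ, LinearMap.ker
          ((LinearMap.proj i : (Fin N → ℝ) →ₗ[ℝ] ℝ) ∘ₗ L.mulVecLin)) = N - Λ.card := by
  classical
  set M : Matrix ↥Λ (Fin N) ℝ := fun i j => L i j with hM
  -- Step 1: the rows of L indexed by Λ are linearly independent, i.e. Mᵀ.mulVecLin is injective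
  have hinj : Function.Injective (Mᵀ.mulVecLin) := by
    rw [← LinearMap.ker_eq_bot, LinearMap.ker_eq_bot']
    intro a ha
    set v : Fin N → ℝ := fun j => if h : j ∈ Λ then a ⟨j, h⟩ else 0 with hv
    have hva : ∀ i : ↥Λ, v ↑i = a i := by
      intro i; simp [hv, i.2]
    have hLv : L.mulVec v = 0 := by
      funext j
      have h1 : Mᵀ.mulVec a j = 0 := by
        rw [← Mᵀ.mulVecLin_apply, ha]; rfl
      have h2 : L.mulVec v j = Mᵀ.mulVec a j := by
        simp only [Matrix.mulVec, dotProduct, Matrix.transpose_apply, hM]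
        rw [← Finset.sum_subset (Finset.subset_univ Λ)
          (by intro k _ hk; simp [hv, hk])]
        rw [← Finset.sum_attach Λ (fun k => L j k * v k)]
        rw [Finset.univ_eq_attach]
        apply Finset.sum_congr rfl
        intro i _
        rw [hva i, hLsymm.apply ↑i j]; rfl
      rw [h2, h1]; simp
    obtain ⟨c, hc⟩ := (hker v).mp hLv
    have hc0 : ∀ k, c k = 0 := by
      intro k
      obtain ⟨i, hiC, hiΛ⟩ := hΛ k
      have hvi : v i = 0 := by simp [hv, hiΛ]
      have hvi2 : v i = c k := by
        rw [hc]
        simp only [Finset.sum_apply, Pi.smul_apply, smul_eq_mul]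
        rw [Finset.sum_eq_single k]
        · simp [hiC]
        · intro l _ hlk
          have hil : i ∉ C l := fun h => (Finset.disjoint_left.mp (hCdisj l k hlk) h) hiC
          simp [hil]
        · intro h; exact absurd (Finset.mem_univ k) h
      rw [hvi] at hvi2
      exact hvi2.symm
    have hv0 : v = 0 := by
      rw [hc]; funext j
      simp [hc0]
    funext i
    have := hva i
    rw [hv0] at this
    simpa using this.symm
  -- Step 2: the analysis subspace is the kernel of M.mulVecLin
  have hset : (⨅ i ∈ Λ, LinearMap.ker
          ((LinearMap.proj i : (Fin N → ℝ) →ₗ[ℝ] ℝ) ∘ₗ L.mulVecLin))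
        = LinearMap.ker M.mulVecLin := by
    ext x
    simp only [Submodule.mem_iInf, LinearMap.mem_ker, LinearMap.comp_apply,
      LinearMap.proj_apply, Matrix.mulVecLin_apply]
    constructor
    · intro h
      funext i
      have := h ↑i i.2
      simpa [Matrix.mulVec, dotProduct, hM] using this
    · intro h i hi
      have := congrFun h ⟨i, hi⟩
      simpa [Matrix.mulVec, dotProduct, hM] using this
  rw [hset]
  -- Step 3: rank-nullity
  have hrank : Module.finrank ℝ (LinearMap.range M.mulVecLin) = Λ.card := by
    have h1 : M.rank = Mᵀ.rank := (Matrix.rank_transpose M).symm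
    have h2 : Mᵀ.rank = Λ.card := by
      rw [Matrix.rank]
      rw [LinearMap.finrank_range_of_inj hinj]
      simp [Module.finrank_pi]
    have : M.rank = Module.finrank ℝ (LinearMap.range M.mulVecLin) := rfl
    rw [← this, h1, h2]
  have hrn := LinearMap.finrank_range_add_finrank_ker M.mulVecLin
  rw [hrank] at hrn
  have hdom : Module.finrank ℝ (Fin N → ℝ) = N := by simp
  rw [hdom] at hrn
  omega
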